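/- The numerical semigroup T equals the union of S with the sets S_{i,j}; that is, T = S ∪ (⋃_{0 ≤ i ≤ q−1, 1 ≤ j ≤ q−1} S_{i,j}) as subsets of ℕ. -/

import Mathlib

/-- The numerical semigroup `S` generated by `q^3 - q + 1` and `q^3 + 1`. -/
def gkS (q : ℤ) : AddSubmonoid ℤ :=
  AddSubmonoid.closure {q ^ 3 - q + 1, q ^ 3 + 1}

/-- The numerical semigroup `T` generated by `q^3 - q + 1`, `q^3 + 1` and the numbers
`q^3 + i(q^4 - q^3 - q^2 + q - 1)` for `i = 0, …, q - 1`. -/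
def gkT (q : ℤ) : AddSubmonoid ℤ :=
  AddSubmonoid.closure ({q ^ 3 - q + 1, q ^ 3 + 1} ∪
    {x : ℤ | ∃ i : ℤ, 0 ≤ i ∧ i ≤ q - 1 ∧
      x = q ^ 3 + i * (q ^ 4 - q ^ 3 - q ^ 2 + q - 1)})

/-- The set `S_{i,j}`. -/
def gkSij (q i j : ℤ) : Set ℤ :=
  {x : ℤ | ∃ k₁ k₂ : ℤ, 0 ≤ k₁ ∧ k₁ ≤ q - 1 ∧ 0 ≤ k₂ ∧ k₂ ≤ q ^ 3 - q - j * q ^ 2 + i ∧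
    x = (i * q - j * q ^ 2 + k₁) * (q ^ 3 - q + 1) + (j * q ^ 2 - i + k₂) * (q ^ 3 + 1)}

def gkRHS (q : ℤ) : Set ℤ :=
  (gkS q : Set ℤ) ∪
      {x : ℤ | ∃ i j : ℤ, 0 ≤ i ∧ i ≤ q - 1 ∧ 1 ≤ j ∧ j ≤ q - 1 ∧ x ∈ gkSij q i j}

lemma int_mul_mem {M : AddSubmonoid ℤ} {x c : ℤ} (hc : 0 ≤ c) (hx : x ∈ M) : c * x ∈ M := by
  have := nsmul_mem hx c.toNat
  rwa [nsmul_eq_mul, Int.toNat_of_nonneg hc] at this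

lemma mem_gkS (q : ℤ) {α β : ℤ} (hα : 0 ≤ α) (hβ : 0 ≤ β) :
    α * (q^3 - q + 1) + β * (q^3 + 1) ∈ gkS q :=
  add_mem (int_mul_mem hα (AddSubmonoid.subset_closure (Set.mem_insert _ _)))
          (int_mul_mem hβ (AddSubmonoid.subset_closure (Set.mem_insert_of_mem _ rfl)))

lemma tn_lt {x d : ℤ} (hd : 0 < d) (h : 0 ≤ x - d) : (x - d).toNat < x.toNat := by omega

lemma q_cases (q : ℤ) (hq : IsPrimePow q) : 2 ≤ q ∨ q ≤ -2 := by
  obtain ⟨p, k, hp, hk, rfl⟩ := hq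
  have hnp : Nat.Prime p.natAbs := Int.prime_iff_natAbs_prime.mp hp
  have h2 : 2 ≤ (p ^ k).natAbs := by
    rw [Int.natAbs_pow]
    exact one_lt_pow' hnp.one_lt hk.ne'
  generalize p ^ k = Q at *
  omega

lemma gk_key (q : ℤ) (hq : 2 ≤ q) : ∀ n : ℕ, ∀ C D α β : ℤ,
    0 ≤ C → 0 ≤ D → D ≤ (q-1)*C → 0 ≤ α → 0 ≤ β → (α + D + (q+2)*C).toNat = n →
    C * q^3 + D * (q^4 - q^3 - q^2 + q - 1) + α*(q^3 - q + 1) + β*(q^3 + 1) ∈ gkRHS q := by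
  intro n
  induction n using Nat.strong_induction_on with
  | _ n ih =>
  intro C D α β hC hD hDC hα hβ hn
  rcases (by omega : C = 0 ∨ 1 ≤ C) with rfl | hC1
  · -- C = 0, hence D = 0, element of S
    have hD0 : D = 0 := by
      have : (q-1) * 0 = 0 := by ring
      omega
    subst hD0
    left
    have e : (0:ℤ) * q^3 + 0 * (q^4 - q^3 - q^2 + q - 1) + α*(q^3 - q + 1) + β*(q^3 + 1)
        = α*(q^3 - q + 1) + β*(q^3 + 1) := by ring
    rw [e]; exact mem_gkS q hα hβ
  by_cases hDq : q ≤ D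
  · -- rule (B): q³ + qδ = (q²-q) b
    have einv : (q-1)*(C-1) = (q-1)*C - (q-1) := by ring
    have hm0 : 0 ≤ (q+2)*(C-1) := mul_nonneg (by linarith) (by linarith)
    have e : α + (D-q) + (q+2)*(C-1) = (α + D + (q+2)*C) - (2*q+2) := by ring
    have hlt : (α + (D-q) + (q+2)*(C-1)).toNat < n := by
      rw [e]; rw [← hn]; exact tn_lt (by linarith) (by rw [← e]; linarith)
    have h := ih _ hlt (C-1) (D-q) α (β + (q^2-q)) (by linarith) (by linarith)
      (by linarith) hα (by nlinarith) rfl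
    have e2 : C * q^3 + D * (q^4 - q^3 - q^2 + q - 1) + α*(q^3 - q + 1) + β*(q^3 + 1)
        = (C-1) * q^3 + (D-q) * (q^4 - q^3 - q^2 + q - 1) + α*(q^3 - q + 1)
          + (β + (q^2-q))*(q^3 + 1) := by ring
    rw [e2]; exact h
  push_neg at hDq
  by_cases hCq1 : q + 1 ≤ C
  · -- rule (A): q·q³ = a + (q-1) b
    have hinv : (q-1)*1 ≤ (q-1)*(C-q) := mul_le_mul_of_nonneg_left (by linarith) (by linarith)
    have hm0 : 0 ≤ (q+2)*(C-q) := mul_nonneg (by linarith) (by linarith)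
    have e : (α+1) + D + (q+2)*(C-q) = (α + D + (q+2)*C) - ((q+2)*q - 1) := by ring
    have hlt : ((α+1) + D + (q+2)*(C-q)).toNat < n := by
      rw [e, ← hn]; exact tn_lt (by nlinarith) (by rw [← e]; linarith)
    have h := ih _ hlt (C-q) D (α+1) (β + (q-1)) (by linarith) hD
      (by linarith) (by linarith) (by linarith) rfl
    have e2 : C * q^3 + D * (q^4 - q^3 - q^2 + q - 1) + α*(q^3 - q + 1) + β*(q^3 + 1)
        = (C-q) * q^3 + D * (q^4 - q^3 - q^2 + q - 1) + (α+1)*(q^3 - q + 1)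
          + (β + (q-1))*(q^3 + 1) := by ring
    rw [e2]; exact h
  push_neg at hCq1
  by_cases hCq : C = q
  · -- C = q : in S, q·q³ + Dδ = (Dq+1)a + (q-1-D)b
    left
    have e : C * q^3 + D * (q^4 - q^3 - q^2 + q - 1) + α*(q^3 - q + 1) + β*(q^3 + 1)
        = (D*q + 1 + α)*(q^3 - q + 1) + (q - 1 - D + β)*(q^3 + 1) := by rw [hCq]; ring
    rw [e]
    exact mem_gkS q (by nlinarith) (by linarith)
  have hCle : C ≤ q - 1 := by omega
  by_cases hαq : q ≤ α
  · by_cases hD1 : D ≤ q - 2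
    · -- rule (C): q a = δ + b
      have hinv : (q-1)*1 ≤ (q-1)*C := mul_le_mul_of_nonneg_left (by linarith) (by linarith)
      have e : (α-q) + (D+1) + (q+2)*C = (α + D + (q+2)*C) - (q-1) := by ring
      have hm0 : 0 ≤ (q+2)*C := mul_nonneg (by linarith) (by linarith)
      have hlt : ((α-q) + (D+1) + (q+2)*C).toNat < n := by
        rw [e, ← hn]; exact tn_lt (by linarith) (by rw [← e]; linarith)
      have h := ih _ hlt C (D+1) (α-q) (β+1) hC (by linarith)
        (by linarith) (by linarith) (by linarith) rfl
      have e2 : C * q^3 + D * (q^4 - q^3 - q^2 + q - 1) + α*(q^3 - q + 1) + β*(q^3 + 1)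
          = C * q^3 + (D+1) * (q^4 - q^3 - q^2 + q - 1) + (α-q)*(q^3 - q + 1)
            + (β+1)*(q^3 + 1) := by ring
      rw [e2]; exact h
    · -- D = q-1, rule: q³ + (q-1)δ + q a = (q²-q+1) b
      have hD' : D = q - 1 := by omega
      subst hD'
      have hm0 : 0 ≤ (q+2)*(C-1) := mul_nonneg (by linarith) (by linarith)
      have e : (α-q) + 0 + (q+2)*(C-1) = (α + (q-1) + (q+2)*C) - (3*q+1) := by ring
      have hlt : ((α-q) + 0 + (q+2)*(C-1)).toNat < n := by
        rw [e, ← hn]; exact tn_lt (by linarith) (by rw [← e]; linarith)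
      have h := ih _ hlt (C-1) 0 (α-q) (β + (q^2-q+1)) (by linarith) le_rfl
        (mul_nonneg (by linarith) (by linarith)) (by linarith) (by nlinarith) rfl
      have e2 : C * q^3 + (q-1) * (q^4 - q^3 - q^2 + q - 1) + α*(q^3 - q + 1) + β*(q^3 + 1)
          = (C-1) * q^3 + 0 * (q^4 - q^3 - q^2 + q - 1) + (α-q)*(q^3 - q + 1)
            + (β + (q^2-q+1))*(q^3 + 1) := by ring
      rw [e2]; exact h
  push_neg at hαq
  by_cases hβb : β ≤ q^3 - q - C*q^2 + D
  · -- in S_{D,C}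
    right
    refine ⟨D, C, hD, by omega, hC1, hCle, α, β, hα, by omega, hβ, hβb, ?_⟩
    ring
  · -- β too big: in S
    push_neg at hβb
    left
    have e : C * q^3 + D * (q^4 - q^3 - q^2 + q - 1) + α*(q^3 - q + 1) + β*(q^3 + 1)
        = (D*q - C*q^2 + α + (q^3+1))*(q^3 - q + 1)
          + (C*q^2 - D + β - (q^3 - q + 1))*(q^3 + 1) := by ring
    rw [e]
    have h1 : C*q^2 ≤ (q-1)*q^2 := mul_le_mul_of_nonneg_right hCle (by positivity)
    have h2 : (q-1)*q^2 = q^3 - q^2 := by ring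
    have h3 : 0 ≤ D*q := mul_nonneg hD (by linarith)
    have h4 : 0 ≤ q^2 := by positivity
    exact mem_gkS q (by linarith) (by linarith)

lemma gkT_sub (q : ℤ) (hq : 2 ≤ q) : (gkT q : Set ℤ) ⊆ gkRHS q := by
  intro x hx
  have main : ∃ C D α β : ℤ, 0 ≤ C ∧ 0 ≤ D ∧ D ≤ (q-1)*C ∧ 0 ≤ α ∧ 0 ≤ β ∧
      x = C * q^3 + D * (q^4 - q^3 - q^2 + q - 1) + α*(q^3 - q + 1) + β*(q^3 + 1) := by
    induction hx using AddSubmonoid.closure_induction with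
    | mem y hy =>
      simp only [Set.mem_union, Set.mem_insert_iff, Set.mem_singleton_iff,
        Set.mem_setOf_eq] at hy
      rcases hy with (rfl | rfl) | ⟨i, hi0, hi1, rfl⟩
      · exact ⟨0, 0, 1, 0, le_rfl, le_rfl, by omega, zero_le_one, le_rfl, by ring⟩
      · exact ⟨0, 0, 0, 1, le_rfl, le_rfl, by omega, le_rfl, zero_le_one, by ring⟩
      · exact ⟨1, i, 0, 0, zero_le_one, hi0, by omega, le_rfl, le_rfl, by ring⟩
    | zero => exact ⟨0, 0, 0, 0, le_rfl, le_rfl, by omega, le_rfl, le_rfl, by ring⟩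
    | add y z hy hz ihy ihz =>
      obtain ⟨C1, D1, a1, b1, h1, h2, h3, h4, h5, rfl⟩ := ihy
      obtain ⟨C2, D2, a2, b2, g1, g2, g3, g4, g5, rfl⟩ := ihz
      refine ⟨C1+C2, D1+D2, a1+a2, b1+b2, by linarith, by linarith, ?_, by linarith,
        by linarith, by ring⟩
      have : (q-1)*(C1+C2) = (q-1)*C1 + (q-1)*C2 := by ring
      linarith
  obtain ⟨C, D, α, β, h1, h2, h3, h4, h5, rfl⟩ := main
  exact gk_key q hq _ C D α β h1 h2 h3 h4 h5 rfl

lemma gkT_sup (q : ℤ) (hq : 2 ≤ q) : gkRHS q ⊆ (gkT q : Set ℤ) := by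
  rintro x (hx | ⟨i, j, hi0, hi1, hj1, hj2, k₁, k₂, hk1, hk2, hk3, hk4, rfl⟩)
  · exact AddSubmonoid.closure_mono Set.subset_union_left hx
  · have gen0 : (q^3 : ℤ) ∈ gkT q :=
      AddSubmonoid.subset_closure (Or.inr ⟨0, le_rfl, by omega, by ring⟩)
    have geni : (q^3 + i * (q^4 - q^3 - q^2 + q - 1) : ℤ) ∈ gkT q :=
      AddSubmonoid.subset_closure (Or.inr ⟨i, hi0, hi1, rfl⟩)
    have gena : (q^3 - q + 1 : ℤ) ∈ gkT q :=
      AddSubmonoid.subset_closure (Or.inl (Set.mem_insert _ _))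
    have genb : (q^3 + 1 : ℤ) ∈ gkT q :=
      AddSubmonoid.subset_closure (Or.inl (Set.mem_insert_of_mem _ rfl))
    have e : (i * q - j * q ^ 2 + k₁) * (q ^ 3 - q + 1) + (j * q ^ 2 - i + k₂) * (q ^ 3 + 1)
        = (j-1) * q^3 + (q^3 + i * (q^4 - q^3 - q^2 + q - 1))
          + k₁ * (q^3 - q + 1) + k₂ * (q^3 + 1) := by ring
    rw [e]
    exact add_mem (add_mem (add_mem (int_mul_mem (by linarith) gen0) geni)
      (int_mul_mem hk1 gena)) (int_mul_mem hk3 genb)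

/-- `T` is the union of `S` and the sets `S_{i,j}` for `0 ≤ i ≤ q-1`, `1 ≤ j ≤ q-1`. -/
theorem gk_T_eq_union (q : ℤ) (hq : IsPrimePow q) :
    (gkT q : Set ℤ) = (gkS q : Set ℤ) ∪
      {x : ℤ | ∃ i j : ℤ, 0 ≤ i ∧ i ≤ q - 1 ∧ 1 ≤ j ∧ j ≤ q - 1 ∧ x ∈ gkSij q i j} := by
  rcases q_cases q hq with h | h
  · exact Set.Subset.antisymm (gkT_sub q h) (gkT_sup q h)
  · have h1 : {x : ℤ | ∃ i : ℤ, 0 ≤ i ∧ i ≤ q - 1 ∧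
        x = q ^ 3 + i * (q ^ 4 - q ^ 3 - q ^ 2 + q - 1)} = ∅ := by
      ext x
      simp only [Set.mem_setOf_eq, Set.mem_empty_iff_false, iff_false]
      rintro ⟨i, hi0, hi1, -⟩; omega
    have h2 : gkT q = gkS q := by
      unfold gkT gkS; rw [h1, Set.union_empty]
    have h3 : {x : ℤ | ∃ i j : ℤ, 0 ≤ i ∧ i ≤ q - 1 ∧ 1 ≤ j ∧ j ≤ q - 1 ∧ x ∈ gkSij q i j}
        = ∅ := by
      ext x
      simp only [Set.mem_setOf_eq, Set.mem_empty_iff_false, iff_false]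
      rintro ⟨i, j, hi0, hi1, -⟩; omega
    rw [h2, h3, Set.union_empty]
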